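/- arXiv:2505.23160 — 3 statements merged into one kernel-verified Lean document; each statement's English description precedes it below -/
import Mathlib

section
/- Closed form of the double hard-thresholding proximal operator: for v ∈ ℝ and λ₀, λ₁ ≥ 0 with √(2λ₀) < 1 − √(2λ₁) and v ∈ (0,1), the minimizer over u ∈ [0,1] of F(u) = ½(u − v)² + λ₀·1{u≠0} + λ₁·1{u≠1} equals 0 if v ≤ √(2λ₀), equals v if √(2λ₀) < v < 1 − √(2λ₁), and equals 1 if v ≥ 1 − √(2λ₁). -/
open Real Set

/-- Closed form of the double hard-thresholding proximal operator: for
`v ∈ (0,1)` and `λ₀, λ₁ ≥ 0` with `√(2λ₀) < 1 - √(2λ₁)`, the minimum over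
`u ∈ [0,1]` of `F(u) = ½(u - v)² + λ₀·1{u ≠ 0} + λ₁·1{u ≠ 1}` is attained at
`0` if `v ≤ √(2λ₀)`, at `v` if `√(2λ₀) < v < 1 - √(2λ₁)`, and at `1` if
`v ≥ 1 - √(2λ₁)`. -/
theorem double_hard_thresholding_closed_form
    (v lam0 lam1 : ℝ) (hl0 : 0 ≤ lam0) (hl1 : 0 ≤ lam1)
    (hthr : Real.sqrt (2 * lam0) < 1 - Real.sqrt (2 * lam1))
    (hv : v ∈ Set.Ioo (0 : ℝ) 1)
    (F : ℝ → ℝ)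
    (hF : ∀ u : ℝ, F u = (u - v) ^ 2 / 2 +
      (if u ≠ 0 then lam0 else 0) + (if u ≠ 1 then lam1 else 0)) :
    (v ≤ Real.sqrt (2 * lam0) → ∀ u ∈ Set.Icc (0 : ℝ) 1, F 0 ≤ F u) ∧
    (Real.sqrt (2 * lam0) < v → v < 1 - Real.sqrt (2 * lam1) →
      ∀ u ∈ Set.Icc (0 : ℝ) 1, F v ≤ F u) ∧
    (1 - Real.sqrt (2 * lam1) ≤ v → ∀ u ∈ Set.Icc (0 : ℝ) 1, F 1 ≤ F u) := by
  obtain ⟨hv0, hv1⟩ := hv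
  have s0 := Real.sqrt_nonneg (2 * lam0)
  have s1 := Real.sqrt_nonneg (2 * lam1)
  have q0 : Real.sqrt (2 * lam0) ^ 2 = 2 * lam0 := Real.sq_sqrt (by linarith)
  have q1 : Real.sqrt (2 * lam1) ^ 2 = 2 * lam1 := Real.sq_sqrt (by linarith)
  refine ⟨?_, ?_, ?_⟩
  · intro h u hu
    obtain ⟨hu0, hu1⟩ := hu
    rw [hF, hF]
    by_cases e0 : u = 0
    · subst e0; simp
    by_cases e1 : u = 1
    · subst e1
      simp only [if_pos, ne_eq, e0, not_false_iff, one_ne_zero, if_neg, not_true,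
        not_not, if_true]
      norm_num
      nlinarith [sq_nonneg (1 - v - Real.sqrt (2 * lam1)), sq_nonneg (v - Real.sqrt (2 * lam0))]
    · simp only [ne_eq, e0, e1, not_false_iff, if_true, hv1.ne, if_neg, not_not]
      norm_num
      nlinarith [sq_nonneg (u - v)]
  · intro h h' u hu
    obtain ⟨hu0, hu1⟩ := hu
    rw [hF, hF]
    by_cases e0 : u = 0
    · subst e0
      simp only [ne_eq, hv0.ne', hv1.ne, not_false_iff, if_true, if_neg, not_not]
      norm_num
      nlinarith
    by_cases e1 : u = 1
    · subst e1
      simp only [ne_eq, hv0.ne', hv1.ne, e0, not_false_iff, if_true, if_neg, not_not]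
      norm_num
      nlinarith
    · simp only [ne_eq, hv0.ne', hv1.ne, e0, e1, not_false_iff, if_true]
      nlinarith [sq_nonneg (u - v)]
  · intro h u hu
    obtain ⟨hu0, hu1⟩ := hu
    rw [hF, hF]
    by_cases e0 : u = 0
    · subst e0
      simp only [ne_eq, not_false_iff, if_true, one_ne_zero, if_neg, not_not, zero_ne_one]
      norm_num
      nlinarith
    by_cases e1 : u = 1
    · subst e1; simp
    · simp only [ne_eq, e0, e1, not_false_iff, if_true, one_ne_zero, if_neg, not_not]
      norm_num
      nlinarith [sq_nonneg (u - v)]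
end

section
/- Distributed stability (Theorem 2): let A ∈ ℝ^{E×E} be a row-stochastic irreducible matrix with nonnegative entries, let T_i ∈ ℝ^{d×d} for i = 1,…,E be symmetric matrices with ‖T_i‖₂ ≤ 1 for all i, and suppose there exists k̄ with ‖T_{k̄}‖₂ < 1. Then the block matrix B = (A ⊗ I_d)·diag(T_1,…,T_E) has spectral radius strictly less than 1. -/
open Matrix Kronecker

lemma key_bound {d : ℕ} (M : Matrix (Fin d) (Fin d) ℝ) (w : EuclideanSpace ℂ (Fin d)) :
    ‖((WithLp.equiv 2 (Fin d → ℂ)).symm (fun p => ∑ q, (M p q : ℂ) * w q) :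
        EuclideanSpace ℂ (Fin d))‖
      ≤ ‖Matrix.toEuclideanCLM (𝕜 := ℝ) M‖ * ‖w‖ := by
  set c := ‖Matrix.toEuclideanCLM (𝕜 := ℝ) M‖ with hc
  have hc0 : 0 ≤ c := norm_nonneg _
  set a : EuclideanSpace ℝ (Fin d) := (WithLp.equiv 2 (Fin d → ℝ)).symm (fun q => (w q).re)
  set b : EuclideanSpace ℝ (Fin d) := (WithLp.equiv 2 (Fin d → ℝ)).symm (fun q => (w q).im)
  have ha : ‖Matrix.toEuclideanCLM (𝕜 := ℝ) M a‖ ≤ c * ‖a‖ :=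
    (Matrix.toEuclideanCLM (𝕜 := ℝ) M).le_opNorm a
  have hb : ‖Matrix.toEuclideanCLM (𝕜 := ℝ) M b‖ ≤ c * ‖b‖ :=
    (Matrix.toEuclideanCLM (𝕜 := ℝ) M).le_opNorm b
  have happ : ∀ (x : EuclideanSpace ℝ (Fin d)) p,
      (Matrix.toEuclideanCLM (𝕜 := ℝ) M x) p = ∑ q, M p q * x q := by
    intro x p
    rfl
  have hsq : ‖((WithLp.equiv 2 (Fin d → ℂ)).symm (fun p => ∑ q, (M p q : ℂ) * w q) :
        EuclideanSpace ℂ (Fin d))‖ ^ 2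
      = ‖Matrix.toEuclideanCLM (𝕜 := ℝ) M a‖ ^ 2 + ‖Matrix.toEuclideanCLM (𝕜 := ℝ) M b‖ ^ 2 := by
    rw [PiLp.norm_sq_eq_of_L2, PiLp.norm_sq_eq_of_L2, PiLp.norm_sq_eq_of_L2,
      ← Finset.sum_add_distrib]
    refine Finset.sum_congr rfl fun p _ => ?_
    rw [happ, happ]
    simp only [WithLp.equiv_symm_apply, WithLp.ofLp_toLp, PiLp.toLp_apply]
    rw [Complex.sq_norm, Complex.normSq_apply]
    have hre : (∑ q, (M p q : ℂ) * w q).re = ∑ q, M p q * (w q).re := by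
      rw [Complex.re_sum]
      exact Finset.sum_congr rfl fun q _ => by simp [Complex.mul_re]
    have him : (∑ q, (M p q : ℂ) * w q).im = ∑ q, M p q * (w q).im := by
      rw [Complex.im_sum]
      exact Finset.sum_congr rfl fun q _ => by simp [Complex.mul_im]
    rw [hre, him]
    simp only [Real.norm_eq_abs, sq_abs, a, b, WithLp.equiv_symm_apply, WithLp.ofLp_toLp, PiLp.toLp_apply]; ring
  have hw : ‖a‖ ^ 2 + ‖b‖ ^ 2 = ‖w‖ ^ 2 := by
    rw [PiLp.norm_sq_eq_of_L2, PiLp.norm_sq_eq_of_L2, PiLp.norm_sq_eq_of_L2,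
      ← Finset.sum_add_distrib]
    refine Finset.sum_congr rfl fun q _ => ?_
    simp only [Real.norm_eq_abs, sq_abs, a, b, WithLp.equiv_symm_apply, WithLp.ofLp_toLp, PiLp.toLp_apply,
      Complex.sq_norm, Complex.normSq_apply]
    ring
  have h2 : ‖((WithLp.equiv 2 (Fin d → ℂ)).symm (fun p => ∑ q, (M p q : ℂ) * w q) :
        EuclideanSpace ℂ (Fin d))‖ ^ 2 ≤ (c * ‖w‖) ^ 2 := by
    rw [hsq]
    have : (c * ‖w‖) ^ 2 = c ^ 2 * ‖a‖ ^ 2 + c ^ 2 * ‖b‖ ^ 2 := by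
      rw [mul_pow, ← hw]; ring
    rw [this]
    nlinarith [norm_nonneg (Matrix.toEuclideanCLM (𝕜 := ℝ) M a),
      norm_nonneg (Matrix.toEuclideanCLM (𝕜 := ℝ) M b), norm_nonneg a, norm_nonneg b]
  have := Real.sqrt_le_sqrt h2
  rwa [Real.sqrt_sq (norm_nonneg _), Real.sqrt_sq (mul_nonneg hc0 (norm_nonneg _))] at this

/-- Distributed stability (Theorem 2): if `A ∈ ℝ^{E×E}` is row-stochastic and
irreducible with nonnegative entries, the `T_i ∈ ℝ^{d×d}` are symmetric with
spectral norm `‖T_i‖₂ ≤ 1`, and `‖T_k̄‖₂ < 1` for some `k̄`, then the block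
matrix `B = (A ⊗ I_d)·diag(T_1,…,T_E)` has spectral radius strictly less
than `1`. -/
theorem distributed_stability
    {E d : ℕ}
    (A : Matrix (Fin E) (Fin E) ℝ)
    (hA_nonneg : ∀ i j, 0 ≤ A i j)
    (hA_stoch : ∀ i, ∑ j, A i j = 1)
    (hA_irr : ∀ i j, ∃ k : ℕ, 1 ≤ k ∧ 0 < (A ^ k) i j)
    (T : Fin E → Matrix (Fin d) (Fin d) ℝ)
    (hTs : ∀ i, (T i).IsSymm)
    (hT1 : ∀ i, ‖Matrix.toEuclideanCLM (𝕜 := ℝ) (T i)‖ ≤ 1)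
    (hk : ∃ k0, ‖Matrix.toEuclideanCLM (𝕜 := ℝ) (T k0)‖ < 1)
    (B : Matrix (Fin E × Fin d) (Fin E × Fin d) ℝ)
    (hB : B = (A ⊗ₖ (1 : Matrix (Fin d) (Fin d) ℝ)) *
      Matrix.of (fun p q : Fin E × Fin d =>
        if p.1 = q.1 then T p.1 p.2 q.2 else 0)) :
    ∀ (lam : ℂ) (v : Fin E × Fin d → ℂ), v ≠ 0 →
      (B.map (fun a => (a : ℂ))) *ᵥ v = lam • v → ‖lam‖ < 1 := by
  intro lam v hv hEig
  -- entries of B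
  have hBent : ∀ (i k : Fin E) (p r : Fin d), B (i, p) (k, r) = A i k * T k p r := by
    intro i k p r
    rw [hB]
    simp [Matrix.mul_apply, Matrix.kroneckerMap_apply, Matrix.one_apply,
      Fintype.sum_prod_type, ite_mul, mul_ite, mul_zero, zero_mul,
      Finset.sum_ite_eq, Finset.sum_ite_eq']
  -- componentwise eigen-equation
  have hcomp : ∀ (i : Fin E) (p : Fin d),
      ∑ k, (A i k : ℂ) * (∑ r, (T k p r : ℂ) * v (k, r)) = lam * v (i, p) := by
    intro i p
    have h := congrFun hEig (i, p)
    simp only [Matrix.mulVec, Matrix.map_apply, dotProduct, Fintype.sum_prod_type,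
      Pi.smul_apply, smul_eq_mul] at h
    rw [← h]
    refine Finset.sum_congr rfl fun k _ => ?_
    rw [Finset.mul_sum]
    refine Finset.sum_congr rfl fun r _ => ?_
    rw [hBent]
    push_cast
    ring
  obtain ⟨p0, hp0⟩ := Function.ne_iff.mp hv
  have : Nonempty (Fin E) := ⟨p0.1⟩
  -- block vectors
  set w : Fin E → EuclideanSpace ℂ (Fin d) :=
    fun j => (WithLp.equiv 2 (Fin d → ℂ)).symm (fun q => v (j, q)) with hw
  set Tw : Fin E → EuclideanSpace ℂ (Fin d) :=
    fun j => (WithLp.equiv 2 (Fin d → ℂ)).symm (fun p => ∑ r, (T j p r : ℂ) * v (j, r)) with hTw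
  set n : Fin E → ℝ := fun j => ‖w j‖ with hn
  set m : ℝ := Finset.univ.sup' Finset.univ_nonempty n with hm
  have hnm : ∀ j, n j ≤ m := fun j => Finset.le_sup' n (Finset.mem_univ j)
  have hn0 : ∀ j, 0 ≤ n j := fun j => norm_nonneg _
  have hmpos : 0 < m := by
    have h1 : w p0.1 ≠ 0 := by
      intro h0
      apply hp0
      have := congrFun (congrArg (WithLp.equiv 2 (Fin d → ℂ)) h0) p0.2
      simpa [hw] using this
    exact lt_of_lt_of_le (norm_pos_iff.mpr h1) (hnm p0.1)
  -- vector form of eigen-equation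
  have hvec : ∀ i, lam • w i = ∑ j, (A i j : ℂ) • Tw j := by
    intro i
    apply (WithLp.equiv 2 (Fin d → ℂ)).injective
    funext p
    have h1 : (WithLp.equiv 2 (Fin d → ℂ)) (lam • w i) p = lam * v (i, p) := rfl
    have h2 : (WithLp.equiv 2 (Fin d → ℂ)) (∑ j, (A i j : ℂ) • Tw j) p
        = ∑ j, (A i j : ℂ) * (∑ r, (T j p r : ℂ) * v (j, r)) := by
      rw [show (WithLp.equiv 2 (Fin d → ℂ)) (∑ j, (A i j : ℂ) • Tw j)
          = ∑ j, (WithLp.equiv 2 (Fin d → ℂ)) ((A i j : ℂ) • Tw j) from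
        map_sum (AddEquiv.mk (WithLp.equiv 2 (Fin d → ℂ)) (fun _ _ => rfl)) _ _]
      rw [Finset.sum_apply]
      rfl
    rw [h1, h2, hcomp]
  -- norm inequality
  have hni : ∀ i, ‖lam‖ * n i ≤ ∑ j, A i j * ‖Tw j‖ := by
    intro i
    calc ‖lam‖ * n i = ‖lam • w i‖ := by
          rw [norm_smul]
      _ = ‖∑ j, (A i j : ℂ) • Tw j‖ := by rw [hvec]
      _ ≤ ∑ j, ‖(A i j : ℂ) • Tw j‖ := norm_sum_le _ _
      _ = ∑ j, A i j * ‖Tw j‖ := by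
          refine Finset.sum_congr rfl fun j _ => ?_
          rw [norm_smul, Complex.norm_real, Real.norm_eq_abs, abs_of_nonneg (hA_nonneg i j)]
  have hTwn : ∀ j, ‖Tw j‖ ≤ ‖Matrix.toEuclideanCLM (𝕜 := ℝ) (T j)‖ * n j := by
    intro j
    exact key_bound (T j) (w j)
  have hTwm : ∀ j, ‖Tw j‖ ≤ n j := by
    intro j
    calc ‖Tw j‖ ≤ ‖Matrix.toEuclideanCLM (𝕜 := ℝ) (T j)‖ * n j := hTwn j
      _ ≤ 1 * n j := mul_le_mul_of_nonneg_right (hT1 j) (hn0 j)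
      _ = n j := one_mul _
  by_contra hcon
  push_neg at hcon
  -- one-step propagation
  have S1 : ∀ i, n i = m → ∀ j, 0 < A i j → n j = m ∧ ‖Tw j‖ = m := by
    intro i hi
    have hle : ∀ j ∈ Finset.univ, A i j * ‖Tw j‖ ≤ A i j * m :=
      fun j _ => mul_le_mul_of_nonneg_left ((hTwm j).trans (hnm j)) (hA_nonneg i j)
    have hsum1 : ∑ j, A i j * m = m := by
      rw [← Finset.sum_mul, hA_stoch, one_mul]
    have hsum2 : ∑ j, A i j * ‖Tw j‖ = ∑ j, A i j * m := by
      refine le_antisymm (Finset.sum_le_sum hle) ?_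
      rw [hsum1]
      calc m = 1 * m := (one_mul m).symm
        _ ≤ ‖lam‖ * n i := by rw [hi]; exact mul_le_mul_of_nonneg_right hcon (le_of_lt hmpos)
        _ ≤ ∑ j, A i j * ‖Tw j‖ := hni i
    have heq := (Finset.sum_eq_sum_iff_of_le hle).mp hsum2
    intro j hj
    have hTwj : ‖Tw j‖ = m := by
      have := heq j (Finset.mem_univ j)
      exact mul_left_cancel₀ (ne_of_gt hj) this
    refine ⟨le_antisymm (hnm j) ?_, hTwj⟩
    rw [← hTwj]
    exact hTwm j
  -- powers nonneg
  have hpow : ∀ (k : ℕ) (i j : Fin E), 0 ≤ (A ^ k) i j := by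
    intro k
    induction k with
    | zero => intro i j; simp [Matrix.one_apply]; split <;> norm_num
    | succ k ih =>
      intro i j
      rw [pow_succ, Matrix.mul_apply]
      exact Finset.sum_nonneg fun x _ => mul_nonneg (ih i x) (hA_nonneg x j)
  -- multi-step propagation
  have S2 : ∀ (k : ℕ), 1 ≤ k → ∀ i j, n i = m → 0 < (A ^ k) i j → n j = m ∧ ‖Tw j‖ = m := by
    intro k
    induction k with
    | zero => omega
    | succ k ih =>
      intro _ i j hi hpos
      rcases Nat.eq_zero_or_pos k with hk0 | hk1
      · subst hk0
        rw [pow_one] at hpos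
        exact S1 i hi j hpos
      · rw [pow_succ, Matrix.mul_apply] at hpos
        have : ∃ x ∈ Finset.univ, (0 : ℝ) < (A ^ k) i x * A x j := by
          by_contra hcx
          push_neg at hcx
          have : ∑ x, (A ^ k) i x * A x j ≤ 0 :=
            Finset.sum_nonpos fun x hx => hcx x hx
          linarith
        obtain ⟨x, _, hx⟩ := this
        have h1 : 0 < (A ^ k) i x := by
          rcases mul_pos_iff.mp hx with ⟨h, _⟩ | ⟨h, _⟩
          · exact h
          · exact absurd (hpow k i x) (not_le.mpr h)
        have h2 : 0 < A x j := by
          rcases mul_pos_iff.mp hx with ⟨_, h⟩ | ⟨_, h⟩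
          · exact h
          · exact absurd (hA_nonneg x j) (not_le.mpr h)
        exact S1 x (ih hk1 i x hi h1).1 j h2
  -- conclude
  obtain ⟨k0, hk0⟩ := hk
  obtain ⟨imax, _, himax⟩ := Finset.exists_mem_eq_sup' Finset.univ_nonempty n
  obtain ⟨k, hk1, hkpos⟩ := hA_irr imax k0
  obtain ⟨hnk0, hTwk0⟩ := S2 k hk1 imax k0 himax.symm hkpos
  have : ‖Tw k0‖ < m := by
    calc ‖Tw k0‖ ≤ ‖Matrix.toEuclideanCLM (𝕜 := ℝ) (T k0)‖ * n k0 := hTwn k0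
      _ < 1 * n k0 := by
          rw [hnk0]
          exact mul_lt_mul_of_pos_right hk0 hmpos
      _ = m := by rw [one_mul, hnk0]
  rw [hTwk0] at this
  exact lt_irrefl m this
end

section
/- Key inequality in the proof of Theorem 2: if A is row-stochastic with nonnegative entries, T_j are matrices with ‖T_j x‖ ≤ ‖x‖ for all x, λ is an eigenvalue of B = (A⊗I)·diag(T_j) with |λ| ≥ 1 and eigenvector v = col{v_i}, then for every i: ‖v_i‖ ≤ (1/|λ|) Σ_j a_{ij} ‖v_j‖, and for an index h attaining the maximum block norm, ‖v_j‖ = ‖v_h‖ and ‖T_j v_j‖ = ‖v_j‖ for all j with a_{hj} > 0. -/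
open Matrix

/-- Key inequality in the proof of Theorem 2: if `A` is row-stochastic with
nonnegative entries, `‖T_j x‖ ≤ ‖x‖` for all `x`, and `λ` is an eigenvalue
with `|λ| ≥ 1` of `B = (A ⊗ I)·diag(T_j)` with eigenvector `v = col{v_i}`
(i.e. `λ v_i = Σ_j a_{ij} T_j v_j` for all `i`), then for every `i`:
`‖v_i‖ ≤ (1/|λ|) Σ_j a_{ij} ‖v_j‖`, and for any index `h` attaining the
maximum block norm, every `j` with `a_{hj} > 0` satisfies `‖v_j‖ = ‖v_h‖` and
`‖T_j v_j‖ = ‖v_j‖`. -/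
theorem key_inequality_distributed
    {E d : ℕ}
    (A : Matrix (Fin E) (Fin E) ℝ)
    (hA_nonneg : ∀ i j, 0 ≤ A i j)
    (hA_stoch : ∀ i, ∑ j, A i j = 1)
    (T : Fin E → Matrix (Fin d) (Fin d) ℝ)
    (hT : ∀ j (x : EuclideanSpace ℝ (Fin d)),
      ‖Matrix.toEuclideanLin (T j) x‖ ≤ ‖x‖)
    (lam : ℝ) (hlam : 1 ≤ |lam|)
    (v : Fin E → EuclideanSpace ℝ (Fin d))
    (heig : ∀ i, lam • v i = ∑ j, A i j • Matrix.toEuclideanLin (T j) (v j)) :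
    (∀ i, ‖v i‖ ≤ (1 / |lam|) * ∑ j, A i j * ‖v j‖) ∧
    ∀ h, (∀ i, ‖v i‖ ≤ ‖v h‖) →
      ∀ j, 0 < A h j →
        ‖v j‖ = ‖v h‖ ∧ ‖Matrix.toEuclideanLin (T j) (v j)‖ = ‖v j‖ := by
  have hlam0 : (0:ℝ) < |lam| := lt_of_lt_of_le one_pos hlam
  have key1 : ∀ i, |lam| * ‖v i‖ ≤ ∑ j, A i j * ‖Matrix.toEuclideanLin (T j) (v j)‖ := by
    intro i
    calc |lam| * ‖v i‖ = ‖lam • v i‖ := by rw [norm_smul, Real.norm_eq_abs]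
      _ = ‖∑ j, A i j • Matrix.toEuclideanLin (T j) (v j)‖ := by rw [heig i]
      _ ≤ ∑ j, ‖A i j • Matrix.toEuclideanLin (T j) (v j)‖ := norm_sum_le _ _
      _ = ∑ j, A i j * ‖Matrix.toEuclideanLin (T j) (v j)‖ := by
          refine Finset.sum_congr rfl fun j _ => ?_
          rw [norm_smul, Real.norm_eq_abs, abs_of_nonneg (hA_nonneg i j)]
  have key2 : ∀ i, ∑ j, A i j * ‖Matrix.toEuclideanLin (T j) (v j)‖ ≤ ∑ j, A i j * ‖v j‖ := by
    intro i
    refine Finset.sum_le_sum fun j _ => ?_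
    exact mul_le_mul_of_nonneg_left (hT j (v j)) (hA_nonneg i j)
  have key : ∀ i, |lam| * ‖v i‖ ≤ ∑ j, A i j * ‖v j‖ :=
    fun i => (key1 i).trans (key2 i)
  constructor
  · intro i
    rw [one_div, ← div_eq_inv_mul, le_div_iff₀ hlam0]
    linarith [key i]
  · intro h hmax j hAj
    have key3 : ∑ j, A h j * ‖v j‖ ≤ ‖v h‖ := by
      calc ∑ j, A h j * ‖v j‖ ≤ ∑ j, A h j * ‖v h‖ :=
            Finset.sum_le_sum fun j _ => mul_le_mul_of_nonneg_left (hmax j) (hA_nonneg h j)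
        _ = ‖v h‖ := by rw [← Finset.sum_mul, hA_stoch h, one_mul]
    have h4 : ‖v h‖ ≤ |lam| * ‖v h‖ := le_mul_of_one_le_left (norm_nonneg _) hlam
    have e2 : ∑ j, A h j * ‖v j‖ = ‖v h‖ := le_antisymm key3 (by linarith [key h, key3])
    have e1 : ∑ j, A h j * ‖Matrix.toEuclideanLin (T j) (v j)‖ = ∑ j, A h j * ‖v j‖ := by
      have := key1 h
      have := key2 h
      linarith
    have hvj : ∀ j ∈ Finset.univ, 0 < A h j → ‖v j‖ = ‖v h‖ := by
      have hsum : ∑ j, A h j * (‖v h‖ - ‖v j‖) = 0 := by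
        simp only [mul_sub, Finset.sum_sub_distrib, ← Finset.sum_mul, hA_stoch h, one_mul, e2]
        ring
      intro j _ hj
      have hz := (Finset.sum_eq_zero_iff_of_nonneg (fun j _ =>
        mul_nonneg (hA_nonneg h j) (sub_nonneg.mpr (hmax j)))).mp hsum j (Finset.mem_univ j)
      have := (mul_eq_zero.mp hz).resolve_left (ne_of_gt hj)
      linarith
    have hTvj : ∀ j ∈ Finset.univ, 0 < A h j →
        ‖Matrix.toEuclideanLin (T j) (v j)‖ = ‖v j‖ := by
      have hsum : ∑ j, A h j * (‖v j‖ - ‖Matrix.toEuclideanLin (T j) (v j)‖) = 0 := by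
        simp only [mul_sub, Finset.sum_sub_distrib, e1]
        ring
      intro j _ hj
      have hz := (Finset.sum_eq_zero_iff_of_nonneg (fun j _ =>
        mul_nonneg (hA_nonneg h j) (sub_nonneg.mpr (hT j (v j))))).mp hsum j (Finset.mem_univ j)
      have := (mul_eq_zero.mp hz).resolve_left (ne_of_gt hj)
      linarith
    exact ⟨hvj j (Finset.mem_univ j) hAj, hTvj j (Finset.mem_univ j) hAj⟩
end
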